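/- Every 2-connected graph with circumference t contains no path with ⌈t²/2⌉ edges; consequently it has pathwidth at most ⌈t²/2⌉ − 1. -/

import Mathlib

open SimpleGraph

universe u v

section Aux
variable {V : Type} [DecidableEq V] {G : SimpleGraph V}

lemma path_edge_length_one {u v : V} {p : G.Walk u v} (hp : p.IsPath) (huv : u ≠ v)
    (he : s(u, v) ∈ p.edges) : p.length = 1 := by
  induction p with
  | nil => simp at he
  | @cons a b c h q ih =>
    rw [Walk.cons_isPath_iff] at hp
    rw [Walk.edges_cons, List.mem_cons] at he
    rcases he with he | he
    · have hbc : b = c := by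
        rw [Sym2.eq_iff] at he
        rcases he with ⟨-, h2⟩ | ⟨h1, -⟩
        · exact h2.symm
        · exact absurd h1 h.ne
      subst hbc
      rw [Walk.isPath_iff_eq_nil] at hp
      rw [hp.1]
      simp
    · exact absurd (Walk.fst_mem_support_of_mem_edges q he) hp.2

/-- Two internally disjoint paths form a cycle. -/
lemma cycle_of_two_paths {u v : V} (S : G.Walk u v) (A : G.Walk v u)
    (hS : S.IsPath) (hA : A.IsPath) (huv : u ≠ v) (hlen : 3 ≤ S.length + A.length)
    (hdisj : ∀ x ∈ S.support, x ∈ A.support → x = u ∨ x = v) :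
    (S.append A).IsCycle := by
  have hSnd : S.support.Nodup := hS.support_nodup
  have hAnd : A.support.Nodup := hA.support_nodup
  refine ⟨⟨⟨?_⟩, ?_⟩, ?_⟩
  · -- edges nodup
    rw [Walk.edges_append, List.nodup_append]
    refine ⟨hS.isTrail.edges_nodup, hA.isTrail.edges_nodup, ?_⟩
    rintro e heS _ heA rfl
    induction e with
    | h a b =>
      have haS := Walk.fst_mem_support_of_mem_edges S heS
      have hbS := Walk.snd_mem_support_of_mem_edges S heS
      have haA := Walk.fst_mem_support_of_mem_edges A heA
      have hbA := Walk.snd_mem_support_of_mem_edges A heA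
      have hab : a ≠ b := (Walk.adj_of_mem_edges S heS).ne
      have ha := hdisj a haS haA
      have hb := hdisj b hbS hbA
      have he : s(a, b) = s(u, v) := by
        rcases ha with rfl | rfl <;> rcases hb with rfl | rfl <;> first
          | exact absurd rfl hab | rw [Sym2.eq_swap] | rfl
      rw [he] at heS heA
      have h1 : S.length = 1 := path_edge_length_one hS huv heS
      have h2 : A.length = 1 := path_edge_length_one hA (Ne.symm huv) (by rwa [Sym2.eq_swap] at heA)
      omega
  · -- ne nil
    intro h
    have := congrArg Walk.length h
    rw [Walk.length_append] at this
    simp only [Walk.length_nil] at this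
    omega
  · -- support tail nodup
    have hsup : (S.append A).support = S.support ++ A.support.tail := Walk.support_append S A
    have htail : (S.append A).support.tail = S.support.tail ++ A.support.tail := by
      rw [hsup, S.support_eq_cons]
      simp
    rw [htail, List.nodup_append]
    refine ⟨(S.support_eq_cons ▸ hSnd).of_cons, (A.support_eq_cons ▸ hAnd).of_cons, ?_⟩
    intro x hxS y hxA hxy
    subst hxy
    have hxS' : x ∈ S.support := List.mem_of_mem_tail hxS
    have hxA' : x ∈ A.support := List.mem_of_mem_tail hxA
    rcases hdisj x hxS' hxA' with rfl | rfl
    · rw [S.support_eq_cons] at hSnd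
      exact (List.nodup_cons.mp hSnd).1 hxS
    · rw [A.support_eq_cons] at hAnd
      exact (List.nodup_cons.mp hAnd).1 hxA

lemma mem_tail_of_closed {a x : V} (C : G.Walk a a) (h0 : C.length ≠ 0) (hx : x ∈ C.support) :
    x ∈ C.support.tail := by
  cases C with
  | nil => simp at h0
  | cons h q =>
    rw [Walk.support_cons] at hx ⊢
    rw [List.tail_cons]
    rcases List.mem_cons.mp hx with rfl | hx
    · exact q.end_mem_support
    · exact hx

lemma mem_support_rotate_iff {a x c : V} (C : G.Walk a a) (hC : C.IsCycle) (h : c ∈ C.support) :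
    x ∈ (C.rotate c h).support ↔ x ∈ C.support := by
  have h0 : C.length ≠ 0 := by have := hC.three_le_length; omega
  have h0' : (C.rotate c h).length ≠ 0 := by
    have := (hC.rotate h).three_le_length; omega
  have hperm := C.support_rotate c h
  constructor
  · intro hx
    exact List.mem_of_mem_tail (hperm.mem_iff.mp (mem_tail_of_closed _ h0' hx))
  · intro hx
    exact List.mem_of_mem_tail (hperm.mem_iff.mpr (mem_tail_of_closed _ h0 hx))

/-- Splitting a cycle based at `a` at another vertex `c` into two arcs. -/
lemma cycle_split {a c : V} (C : G.Walk a a) (hC : C.IsCycle) (hc : c ∈ C.support) (hne : c ≠ a) :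
    ∃ (A₁ : G.Walk a c) (A₂ : G.Walk c a), A₁.IsPath ∧ A₂.IsPath ∧
      A₁.length + A₂.length = C.length ∧
      (∀ y ∈ A₁.support, y ∈ C.support) ∧ (∀ y ∈ A₂.support, y ∈ C.support) ∧
      (∀ y ∈ C.support, y ∈ A₁.support ∨ y ∈ A₂.support) ∧
      (∀ y ∈ A₁.support, y ∈ A₂.support → y = a ∨ y = c) := by
  set A₁ := C.takeUntil c hc with hA₁
  set A₂ := C.dropUntil c hc with hA₂
  have hspec : A₁.append A₂ = C := C.take_spec hc
  have hsup : C.support = A₁.support ++ A₂.support.tail := by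
    rw [← hspec, Walk.support_append]
  have hlen : A₁.length + A₂.length = C.length := by
    rw [← hspec, Walk.length_append]
  have hT : C.support.tail.Nodup := hC.support_nodup
  have htails : C.support.tail = A₁.support.tail ++ A₂.support.tail := by
    rw [hsup, A₁.support_eq_cons]
    simp
  rw [htails, List.nodup_append] at hT
  obtain ⟨hT1, hT2, hT3⟩ := hT
  have hcA₁ : c ∈ A₁.support.tail := by
    have : c ∈ A₁.support := A₁.end_mem_support
    rw [A₁.support_eq_cons] at this
    rcases List.mem_cons.mp this with rfl | h
    · exact absurd rfl hne
    · exact h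
  have haA₂ : a ∈ A₂.support.tail := by
    have : a ∈ A₂.support := A₂.end_mem_support
    rw [A₂.support_eq_cons] at this
    rcases List.mem_cons.mp this with h | h
    · exact absurd h.symm hne
    · exact h
  have hP1 : A₁.IsPath := by
    rw [Walk.isPath_def, A₁.support_eq_cons, List.nodup_cons]
    exact ⟨fun ha => hT3 a ha a haA₂ rfl, hT1⟩
  have hP2 : A₂.IsPath := by
    rw [Walk.isPath_def, A₂.support_eq_cons, List.nodup_cons]
    exact ⟨fun hcc => hT3 c hcA₁ c hcc rfl, hT2⟩
  refine ⟨A₁, A₂, hP1, hP2, hlen, ?_, ?_, ?_, ?_⟩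
  · intro y hy; rw [hsup]; exact List.mem_append_left _ hy
  · intro y hy
    rw [A₂.support_eq_cons] at hy
    rcases List.mem_cons.mp hy with rfl | hy
    · exact hc
    · rw [hsup]; exact List.mem_append_right _ hy
  · intro y hy
    rw [hsup] at hy
    rcases List.mem_append.mp hy with hy | hy
    · exact Or.inl hy
    · exact Or.inr (List.mem_of_mem_tail hy)
  · intro y hy1 hy2
    rw [A₁.support_eq_cons] at hy1
    rw [A₂.support_eq_cons] at hy2
    rcases List.mem_cons.mp hy1 with rfl | hy1
    · exact Or.inl rfl
    rcases List.mem_cons.mp hy2 with rfl | hy2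
    · exact Or.inr rfl
    · exact (hT3 y hy1 y hy2 rfl).elim

lemma segment_bound {t : ℕ} {G : SimpleGraph V}
    (Hcyc : ∀ (x : V) (D : G.Walk x x), D.IsCycle → D.length ≤ t)
    {x a c : V} (C : G.Walk x x) (hC : C.IsCycle)
    (ha : a ∈ C.support) (hc : c ∈ C.support) (hac : a ≠ c)
    (S : G.Walk a c) (hS : S.IsPath)
    (hint : ∀ y ∈ S.support, y ∈ C.support → y = a ∨ y = c) :
    2 * S.length + C.length ≤ 2 * t := by
  have hq3 : 3 ≤ C.length := hC.three_le_length
  set C' := C.rotate a ha with hC'def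
  have hC' : C'.IsCycle := hC.rotate ha
  have hlenC' : C'.length = C.length := by
    have h := (C.rotate_edges a ha).perm.length_eq
    rw [← Walk.length_edges, ← Walk.length_edges]; exact h
  have hcC' : c ∈ C'.support := (mem_support_rotate_iff C hC ha).mpr hc
  obtain ⟨A₁, A₂, hP1, hP2, hsum, hsub1, hsub2, -, -⟩ :=
    cycle_split C' hC' hcC' (Ne.symm hac)
  have hmem : ∀ y ∈ C'.support, y ∈ C.support := fun y hy =>
    (mem_support_rotate_iff C hC ha).mp hy
  have hS1 : 1 ≤ S.length := by
    rcases Nat.eq_zero_or_pos S.length with h0 | h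
    · exact absurd (Walk.eq_of_length_eq_zero h0) hac
    · exact h
  -- choose the longer arc, as a walk from c to a
  have key : ∀ (W : G.Walk c a), W.IsPath → (∀ y ∈ W.support, y ∈ C'.support) →
      C.length ≤ 2 * W.length → 2 * S.length + C.length ≤ 2 * t := by
    intro W hW hWsub hWlong
    have hdisj : ∀ y ∈ S.support, y ∈ W.support → y = a ∨ y = c :=
      fun y hyS hyW => hint y hyS (hmem y (hWsub y hyW))
    have hlen3 : 3 ≤ S.length + W.length := by omega
    have hcyc := cycle_of_two_paths S W hS hW hac hlen3 hdisj
    have := Hcyc a (S.append W) hcyc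
    rw [Walk.length_append] at this
    omega
  by_cases hcase : A₁.length ≤ A₂.length
  · exact key A₂ hP2 hsub2 (by omega)
  · refine key A₁.reverse hP1.reverse ?_ (by rw [Walk.length_reverse]; omega)
    intro y hy
    rw [Walk.support_reverse, List.mem_reverse] at hy
    exact hsub1 y hy

lemma find?_before_fail {α : Type} (p : α → Bool) :
    ∀ (l₁ : List α) (l₂ : List α) (x : α), (l₁ ++ x :: l₂).find? p = some x → x ∉ l₁ →
      ∀ y ∈ l₁, ¬ p y := by
  intro l₁
  induction l₁ with
  | nil => intro l₂ x _ _ y hy; simp at hy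
  | cons a l ih =>
    intro l₂ x hfind hx y hy
    rw [List.cons_append, List.find?_cons] at hfind
    rcases hpa : p a with _ | _
    · rw [hpa] at hfind
      simp only [cond_false] at hfind
      rcases List.mem_cons.mp hy with rfl | hy
      · simp [hpa]
      · exact ih l₂ x hfind (fun h => hx (List.mem_cons_of_mem _ h)) y hy
    · rw [hpa] at hfind
      simp only [cond_true, Option.some.injEq] at hfind
      exact absurd (hfind ▸ List.mem_cons_self) hx

lemma support_eq_concat {u v : V} (p : G.Walk u v) : ∃ l, p.support = l ++ [v] := by
  induction p with
  | nil => exact ⟨[], rfl⟩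
  | @cons a b c h q ih =>
    obtain ⟨l, hl⟩ := ih
    exact ⟨a :: l, by rw [Walk.support_cons, hl]; rfl⟩

lemma walk_bound {t : ℕ} {G : SimpleGraph V}
    (Hcyc : ∀ (x : V) (D : G.Walk x x), D.IsCycle → D.length ≤ t)
    {x : V} (C : G.Walk x x) (hC : C.IsCycle) :
    ∀ (n : ℕ) {a b : V} (W : G.Walk a b), W.length ≤ n → W.IsPath →
      a ∈ C.support → b ∈ C.support →
      2 * W.length ≤ ((W.support.countP (fun y => decide (y ∈ C.support))) - 1)
        * (2 * t - C.length) := by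
  have hq3 : 3 ≤ C.length := hC.three_le_length
  have hqt : C.length ≤ t := Hcyc x C hC
  set p : V → Bool := fun y => decide (y ∈ C.support) with hp
  intro n
  induction n with
  | zero =>
    intro a b W hWlen _ _ _
    interval_cases h : W.length
    · omega
  | succ n ih =>
    intro a b W hWlen hW ha hb
    rcases Nat.eq_zero_or_pos W.length with h0 | hpos
    · omega
    have hab : a ≠ b := by
      intro h
      subst h
      rw [Walk.isPath_iff_eq_nil] at hW
      subst hW
      simp at hpos
    have hbtail : b ∈ W.support.tail := Walk.end_mem_tail_support_of_ne hab W
    have hfind : (W.support.tail.find? p).isSome := by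
      rw [List.find?_isSome]
      exact ⟨b, hbtail, by simp [hp, hb]⟩
    obtain ⟨c, hfc⟩ := Option.isSome_iff_exists.mp hfind
    have hcC : c ∈ C.support := by
      have := List.find?_some hfc
      simpa [hp] using this
    have hctail : c ∈ W.support.tail := List.mem_of_find?_eq_some hfc
    have hcsup : c ∈ W.support := List.mem_of_mem_tail hctail
    have hanotail : a ∉ W.support.tail := by
      have := hW.support_nodup
      rw [W.support_eq_cons] at this
      exact (List.nodup_cons.mp this).1
    have hac : a ≠ c := fun h => hanotail (h ▸ hctail)
    set T := W.takeUntil c hcsup with hT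
    set D := W.dropUntil c hcsup with hD
    have hspec : T.append D = W := W.take_spec hcsup
    have hTpath : T.IsPath := hW.takeUntil hcsup
    have hDpath : D.IsPath := hW.dropUntil hcsup
    have hlensum : T.length + D.length = W.length := by
      rw [← hspec, Walk.length_append]
    have hT1 : 1 ≤ T.length := by
      rcases Nat.eq_zero_or_pos T.length with h0 | h
      · exact absurd (Walk.eq_of_length_eq_zero h0) hac
      · exact h
    have hsupW : W.support = T.support ++ D.support.tail := by
      rw [← hspec, Walk.support_append]
    -- decompose T.support
    obtain ⟨l, hl⟩ := support_eq_concat T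
    have hTsupcons : T.support = a :: T.support.tail := T.support_eq_cons
    obtain ⟨l', hl'⟩ : ∃ l', l = a :: l' := by
      cases l with
      | nil =>
        exfalso
        have h1 : T.support.length = 1 := by rw [hl]; rfl
        rw [Walk.length_support] at h1
        omega
      | cons z l' =>
        refine ⟨l', ?_⟩
        rw [hl] at hTsupcons
        simp at hTsupcons
        rw [hTsupcons]
    have hTtail : T.support.tail = l' ++ [c] := by
      rw [hl', List.cons_append] at hl
      rw [hl] at hTsupcons ⊢
      simp
    -- l' elements fail p
    have hWtail : W.support.tail = l' ++ c :: D.support.tail := by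
      rw [hsupW, hTsupcons, hTtail]
      simp
    have hcl' : c ∉ l' := by
      have := hTpath.support_nodup
      rw [hTsupcons, hTtail, List.nodup_cons, List.nodup_append] at this
      intro h
      exact this.2.2.2 c h c (List.mem_singleton_self c) rfl
    have hl'fail : ∀ y ∈ l', ¬ p y := by
      apply find?_before_fail p l' D.support.tail c (by rw [← hWtail]; exact hfc) hcl'
    -- segment bound for T
    have hTseg : 2 * T.length + C.length ≤ 2 * t := by
      apply segment_bound Hcyc C hC ha hcC hac T hTpath
      intro y hy hyC
      rw [hTsupcons, hTtail] at hy
      rcases List.mem_cons.mp hy with rfl | hy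
      · exact Or.inl rfl
      rcases List.mem_append.mp hy with hy | hy
      · exact absurd (by simp [hp, hyC]) (hl'fail y hy)
      · exact Or.inr (List.mem_singleton.mp hy)
    -- recursion on D
    have hIH := ih D (by omega) hDpath hcC hb
    -- counting
    have hcntT : T.support.countP p = 2 := by
      rw [hTsupcons, hTtail]
      have h1 : l'.countP p = 0 := List.countP_eq_zero.mpr hl'fail
      have h2 : p a = true := by simp [hp, ha]
      have h3 : p c = true := by simp [hp, hcC]
      simp [List.countP_cons, List.countP_append, h1, h2, h3]
    have hcntD : D.support.countP p = D.support.tail.countP p + 1 := by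
      conv_lhs => rw [D.support_eq_cons]
      have h3 : p c = true := by simp [hp, hcC]
      rw [List.countP_cons, h3]; rfl
    have hcntW : W.support.countP p = D.support.countP p + 1 := by
      rw [hsupW, List.countP_append]
      omega
    have hcntD1 : 1 ≤ D.support.countP p := by
      rw [hcntD]; omega
    set K := 2 * t - C.length with hK
    have hTK : 2 * T.length ≤ K := by omega
    calc 2 * W.length = 2 * T.length + 2 * D.length := by omega
      _ ≤ K + (D.support.countP p - 1) * K := Nat.add_le_add hTK hIH
      _ = ((D.support.countP p - 1) + 1) * K := by rw [Nat.succ_mul, Nat.add_comm]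
      _ = (W.support.countP p - 1) * K := by
          congr 1
          omega

section Menger

variable {G : SimpleGraph V}

lemma avoid_path (hcut : ∀ S : Set V, S.Finite → S.ncard < 2 → (G.induce Sᶜ).Connected)
    (x u v : V) (hu : u ≠ x) (hv : v ≠ x) :
    ∃ P : G.Walk u v, P.IsPath ∧ x ∉ P.support := by
  have hconn' := hcut {x} (Set.finite_singleton x) (by simp)
  have hr : (G.induce ({x} : Set V)ᶜ).Reachable ⟨u, by simp [hu]⟩ ⟨v, by simp [hv]⟩ :=
    hconn' _ _
  obtain ⟨W⟩ := hr
  let f := (SimpleGraph.Embedding.induce (G := G) ({x} : Set V)ᶜ)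
  have hW := (W.toPath).property
  set Q : G.Walk u v := ((W.toPath).val.map f.toHom)
  refine ⟨Q, ?_, ?_⟩
  · exact Walk.map_isPath_of_injective f.injective hW
  · intro hxQ
    rw [show Q.support = _ from Walk.support_map _ _, List.mem_map] at hxQ
    obtain ⟨⟨y, hy⟩, -, h⟩ := hxQ
    simp only [Set.mem_compl_iff, Set.mem_singleton_iff] at hy
    exact hy h

lemma cycle_through_edge (h3 : 3 ≤ Nat.card V)
    (hcut : ∀ S : Set V, S.Finite → S.ncard < 2 → (G.induce Sᶜ).Connected)
    {u v : V} (hadj : G.Adj u v) :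
    ∃ (x : V) (C : G.Walk x x), C.IsCycle ∧ u ∈ C.support ∧ v ∈ C.support := by
  classical
  set G' := G.deleteEdges {s(u, v)} with hG'
  have huv : u ≠ v := hadj.ne
  have hreach : G'.Reachable u v := by
    by_contra hnr
    by_cases hw : ∃ w, G.Adj u w ∧ w ≠ v
    · obtain ⟨w, hw1, hw2⟩ := hw
      have hadj' : G'.Adj u w := by
        rw [hG', deleteEdges_adj]
        refine ⟨hw1, ?_⟩
        simp only [Set.mem_singleton_iff, Sym2.eq_iff]
        rintro (⟨-, rfl⟩ | ⟨rfl, -⟩)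
        · exact hw2 rfl
        · exact huv rfl
      obtain ⟨P, hP, hP2⟩ := avoid_path hcut u w v (hw1.ne') (Ne.symm huv)
      have hedges : ∀ e ∈ P.edges, e ∉ ({s(u,v)} : Set (Sym2 V)) := by
        intro e he
        simp only [Set.mem_singleton_iff]
        rintro rfl
        exact hP2 (Walk.fst_mem_support_of_mem_edges P he)
      have : G'.Reachable w v := ⟨P.toDeleteEdges _ hedges⟩
      exact hnr (hadj'.reachable.trans this)
    · push_neg at hw
      obtain ⟨c, hc1, hc2⟩ : ∃ c : V, c ≠ u ∧ c ≠ v := by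
        by_contra hcc
        push_neg at hcc
        have : (Set.univ : Set V) ⊆ {u, v} := by
          intro z _
          rcases eq_or_ne z u with rfl | hz
          · exact Set.mem_insert _ _
          · exact Set.mem_insert_of_mem _ (hcc z hz)
        have hle := Set.ncard_le_ncard this (Set.toFinite _)
        rw [Set.ncard_univ] at hle
        have : ({u, v} : Set V).ncard ≤ 2 := by
          apply le_trans (Set.ncard_insert_le _ _)
          simp
        omega
      obtain ⟨P, hP, hP2⟩ := avoid_path hcut v u c huv hc2
      cases P with
      | nil => exact hc1 rfl
      | cons h q =>
        rename_i y
        have hyv : y = v := hw y h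
        subst hyv
        exact hP2 (by rw [Walk.support_cons]; exact List.mem_cons_of_mem _ q.start_mem_support)
  obtain ⟨W⟩ := hreach
  set Q0 := W.toPath.1 with hQ0
  have hQ0p : Walk.IsPath Q0 := W.toPath.2
  set Q : G.Walk u v := Q0.map (Hom.ofLE (G.deleteEdges_le _)) with hQdef
  have hQp : Q.IsPath := Walk.map_isPath_of_injective (fun a b h => h) hQ0p
  have hQe : s(u, v) ∉ Q.edges := by
    intro he
    rw [hQdef, Walk.edges_map] at he
    obtain ⟨e, he1, he2⟩ := List.mem_map.mp he
    have : e ∈ G'.edgeSet := Walk.edges_subset_edgeSet Q0 he1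
    have heq : e = s(u, v) := by
      have : Sym2.map id e = s(u,v) := by simpa using he2
      simpa using this
    rw [heq] at this
    rw [hG'] at this
    simp [edgeSet_deleteEdges] at this
  refine ⟨u, Walk.cons hadj Q.reverse, ?_, ?_, ?_⟩
  · rw [Walk.cons_isCycle_iff]
    refine ⟨hQp.reverse, ?_⟩
    rw [Walk.edges_reverse, List.mem_reverse]
    exact hQe
  · exact Walk.start_mem_support _
  · rw [Walk.support_cons]
    refine List.mem_cons_of_mem _ ?_
    rw [Walk.support_reverse, List.mem_reverse]
    exact Walk.end_mem_support _

end Menger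

lemma walk_concat_decomp {u v : V} (P : G.Walk u v) (h : P.length ≠ 0) :
    ∃ (w : V) (hadj : G.Adj w v) (q : G.Walk u w), q.length + 1 = P.length := by
  induction P with
  | nil => simp at h
  | @cons a b c h' q ih =>
    rcases Nat.eq_zero_or_pos q.length with h0 | hpos
    · have hb : b = c := Walk.eq_of_length_eq_zero h0
      subst hb
      exact ⟨a, h', Walk.nil, by simp [h0]⟩
    · obtain ⟨w, hadj, q', hq'⟩ := ih (by omega)
      exact ⟨w, hadj, Walk.cons h' q', by rw [Walk.length_cons, Walk.length_cons]; omega⟩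

theorem common_cycle (h3 : 3 ≤ Nat.card V)
    (hcut : ∀ S : Set V, S.Finite → S.ncard < 2 → (G.induce Sᶜ).Connected)
    (hconn : G.Connected) :
    ∀ (u v : V), u ≠ v →
      ∃ (x : V) (C : G.Walk x x), C.IsCycle ∧ u ∈ C.support ∧ v ∈ C.support := by
  classical
  suffices H : ∀ (d : ℕ) (u v : V), u ≠ v → G.dist u v = d →
      ∃ (x : V) (C : G.Walk x x), C.IsCycle ∧ u ∈ C.support ∧ v ∈ C.support by
    exact fun u v huv => H (G.dist u v) u v huv rfl
  intro d
  induction d using Nat.strong_induction_on with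
  | _ d ih =>
    intro u v huv hd
    have hdpos : 1 ≤ d := by
      have := hconn.pos_dist_of_ne huv
      omega
    rcases eq_or_lt_of_le hdpos with h1 | h2
    · -- adjacent case
      have hadj : G.Adj u v := by
        rw [← dist_eq_one_iff_adj (G := G)]
        omega
      exact cycle_through_edge h3 hcut hadj
    · -- d ≥ 2
      obtain ⟨P, hPlen⟩ := (hconn u v).exists_walk_length_eq_dist
      rw [hd] at hPlen
      -- extract penultimate vertex
      obtain ⟨w, hadjwv, q, hqlen'⟩ := walk_concat_decomp P (by omega)
      have hqlen : q.length = d - 1 := by omega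
      have hdw : G.dist u w = d - 1 := by
        have h1 : G.dist u w ≤ d - 1 := hqlen ▸ dist_le q
        have h2 : G.dist u v ≤ G.dist u w + G.dist w v := hconn.dist_triangle
        have h3' : G.dist w v ≤ 1 := by
          have : G.dist w v ≤ (Walk.cons hadjwv Walk.nil).length := dist_le _
          simpa using this
        omega
      have huw : u ≠ w := by
        intro h
        subst h
        rw [SimpleGraph.dist_self] at hdw
        omega
      obtain ⟨x₀, C₀, hC₀, huC₀, hwC₀⟩ := ih (d - 1) (by omega) u w huw hdw
      by_cases hvC : v ∈ C₀.support
      · exact ⟨x₀, C₀, hC₀, huC₀, hvC⟩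
      -- v not on C₀: reroute
      have hvw : v ≠ w := fun h => (h ▸ hadjwv).ne rfl
      obtain ⟨R, hR, hRw⟩ := avoid_path hcut w v u hvw huw
      -- first C₀-hit of R
      set p : V → Bool := fun y => decide (y ∈ C₀.support) with hp
      have hfind : (R.support.find? p).isSome := by
        rw [List.find?_isSome]
        exact ⟨u, R.end_mem_support, by simp [hp, huC₀]⟩
      obtain ⟨x, hfx⟩ := Option.isSome_iff_exists.mp hfind
      have hxC : x ∈ C₀.support := by simpa [hp] using List.find?_some hfx
      have hxR : x ∈ R.support := List.mem_of_find?_eq_some hfx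
      have hxv : x ≠ v := fun h => hvC (h ▸ hxC)
      have hxw : x ≠ w := fun h => hRw (h ▸ hxR)
      set R₁ := R.takeUntil x hxR with hR₁
      set R₂ := R.dropUntil x hxR with hR₂
      have hR₁p : R₁.IsPath := hR.takeUntil hxR
      have hsupR : R.support = R₁.support ++ R₂.support.tail := by
        rw [← R.take_spec hxR, Walk.support_append]
      obtain ⟨m, hm⟩ := support_eq_concat R₁
      have hxm : x ∉ m := by
        have := hR₁p.support_nodup
        rw [hm, List.nodup_append] at this
        exact fun hh => this.2.2 x hh x (List.mem_singleton_self x) rfl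
      have hmfail : ∀ y ∈ m, ¬ p y := by
        apply find?_before_fail p m R₂.support.tail x ?_ hxm
        rw [← List.singleton_append, ← List.append_assoc, ← hm, ← hsupR]
        exact hfx
      have hR₁int : ∀ y ∈ R₁.support, y ∈ C₀.support → y = x := by
        intro y hy hyC
        rw [hm] at hy
        rcases List.mem_append.mp hy with hy | hy
        · exact absurd (by simp [hp, hyC]) (hmfail y hy)
        · exact List.mem_singleton.mp hy
      have hR₁w : w ∉ R₁.support := fun h => hRw ((Walk.support_takeUntil_subset R hxR) h)
      have hvnotC : v ∉ C₀.support := hvC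
      -- the arc through u
      set C₁ := C₀.rotate x hxC with hC₁def
      have hC₁ : C₁.IsCycle := hC₀.rotate hxC
      have hwC₁ : w ∈ C₁.support := (mem_support_rotate_iff C₀ hC₀ hxC).mpr hwC₀
      have huC₁ : u ∈ C₁.support := (mem_support_rotate_iff C₀ hC₀ hxC).mpr huC₀
      obtain ⟨A₁, A₂, hA₁p, hA₂p, -, hA₁sub, hA₂sub, hcov, -⟩ :=
        cycle_split C₁ hC₁ hwC₁ (Ne.symm hxw)
      have hC₁sub : ∀ y ∈ C₁.support, y ∈ C₀.support :=
        fun y hy => (mem_support_rotate_iff C₀ hC₀ hxC).mp hy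
      obtain ⟨A, hAp, hAsub, huA⟩ :
          ∃ A : G.Walk x w, A.IsPath ∧ (∀ y ∈ A.support, y ∈ C₀.support) ∧ u ∈ A.support := by
        rcases hcov u huC₁ with hu1 | hu2
        · exact ⟨A₁, hA₁p, fun y hy => hC₁sub y (hA₁sub y hy), hu1⟩
        · refine ⟨A₂.reverse, hA₂p.reverse, ?_, ?_⟩
          · intro y hy
            rw [Walk.support_reverse, List.mem_reverse] at hy
            exact hC₁sub y (hA₂sub y hy)
          · rw [Walk.support_reverse, List.mem_reverse]
            exact hu2
      -- assemble cycle at v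
      set B := R₁.append A with hBdef
      have hAtail : A.support.tail.Nodup := by
        have := hAp.support_nodup
        rw [A.support_eq_cons] at this
        exact (List.nodup_cons.mp this).2
      have hxA : x ∉ A.support.tail := by
        have := hAp.support_nodup
        rw [A.support_eq_cons] at this
        exact (List.nodup_cons.mp this).1
      have hBp : B.IsPath := by
        rw [Walk.isPath_def, hBdef, Walk.support_append, List.nodup_append]
        refine ⟨hR₁p.support_nodup, hAtail, ?_⟩
        intro y hy1 y' hy2 hyy
        subst hyy
        have hyA : y ∈ A.support := List.mem_of_mem_tail hy2
        have : y = x := hR₁int y hy1 (hAsub y hyA)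
        subst this
        exact hxA hy2
      have hedge : s(v, w) ∉ B.edges := by
        intro he
        rw [hBdef, Walk.edges_append, List.mem_append] at he
        rcases he with he | he
        · exact hR₁w (Walk.snd_mem_support_of_mem_edges R₁ he)
        · exact hvnotC (hAsub v (Walk.fst_mem_support_of_mem_edges A he))
      refine ⟨v, Walk.cons hadjwv.symm B.reverse, ?_, ?_, ?_⟩
      · rw [Walk.cons_isCycle_iff]
        refine ⟨hBp.reverse, ?_⟩
        rw [Walk.edges_reverse, List.mem_reverse]
        exact hedge
      · rw [Walk.support_cons]
        refine List.mem_cons_of_mem _ ?_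
        rw [Walk.support_reverse, List.mem_reverse, hBdef, Walk.mem_support_append_iff]
        right
        exact huA
      · exact Walk.start_mem_support _

theorem two_mul_path_length_le {t : ℕ} (h3 : 3 ≤ Nat.card V)
    (hcut : ∀ S : Set V, S.Finite → S.ncard < 2 → (G.induce Sᶜ).Connected)
    (hconn : G.Connected)
    (Hcyc : ∀ (x : V) (D : G.Walk x x), D.IsCycle → D.length ≤ t)
    {u v : V} (P : G.Walk u v) (hP : P.IsPath) : 2 * P.length ≤ t * t - t := by
  classical
  rcases Nat.eq_zero_or_pos P.length with h0 | hpos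
  · omega
  have huv : u ≠ v := by
    intro h
    subst h
    rw [Walk.isPath_iff_eq_nil] at hP
    subst hP
    simp at hpos
  obtain ⟨x, C, hC, huC, hvC⟩ := common_cycle h3 hcut hconn u v huv
  have hq3 : 3 ≤ C.length := hC.three_le_length
  have hqt : C.length ≤ t := Hcyc x C hC
  set p : V → Bool := fun y => decide (y ∈ C.support) with hp
  have hbound := walk_bound Hcyc C hC P.length P le_rfl hP huC hvC
  set cnt := P.support.countP p with hcnt
  have hClen0 : C.length ≠ 0 := by omega
  have hcntq : cnt ≤ C.length := by
    have h1 : cnt = (P.support.filter p).length := List.countP_eq_length_filter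
    have h2 : (P.support.filter p).Nodup := hP.support_nodup.filter _
    have h3' : ∀ y ∈ P.support.filter p, y ∈ C.support.tail := by
      intro y hy
      rw [List.mem_filter] at hy
      exact mem_tail_of_closed C hClen0 (by simpa [hp] using hy.2)
    have h4 : (P.support.filter p).toFinset.card = (P.support.filter p).length :=
      List.toFinset_card_of_nodup h2
    have h5 : (P.support.filter p).toFinset ⊆ C.support.tail.toFinset := by
      intro y hy
      rw [List.mem_toFinset] at hy ⊢
      exact h3' y hy
    have h6 := Finset.card_le_card h5
    have h7 : C.support.tail.toFinset.card ≤ C.support.tail.length := C.support.tail.toFinset_card_le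
    have h8 : C.support.tail.length = C.length := by
      have := C.length_support
      rcases hsup : C.support with _ | ⟨z, l⟩
      · exact absurd hsup C.support_ne_nil
      · rw [hsup] at this
        simp only [List.tail_cons]
        simp at this
        omega
    omega
  have hstep : 2 * P.length ≤ (C.length - 1) * (2 * t - C.length) :=
    le_trans hbound (Nat.mul_le_mul_right _ (by omega))
  have hfinal : (C.length - 1) * (2 * t - C.length) ≤ t * t - t := by
    set q := C.length
    have hq1 : 1 ≤ q := by omega
    have hq2t : q ≤ 2 * t := by omega
    have htt : t ≤ t * t := Nat.le_mul_of_pos_left t (by omega)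
    zify [hq1, hq2t, htt]
    nlinarith [sq_nonneg ((t : ℤ) - (q : ℤ)), (show (q:ℤ) ≤ t by exact_mod_cast hqt)]
  omega

section PW

variable {G : SimpleGraph V}

/-- Interval (consecutiveness) property for a list of bags. -/
def IntervalL (L : List (Finset V)) : Prop :=
  ∀ (x : V) (i j k : ℕ), i ≤ j → j ≤ k → k < L.length →
    x ∈ L.getD i ∅ → x ∈ L.getD k ∅ → x ∈ L.getD j ∅

lemma getD_mem {L : List (Finset V)} {i : ℕ} (h : i < L.length) : L.getD i ∅ ∈ L := by
  rw [List.getD_eq_getElem L ∅ h]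
  exact List.getElem_mem h

lemma interval_append {L₁ L₂ : List (Finset V)} (h₁ : IntervalL L₁) (h₂ : IntervalL L₂)
    (hx : ∀ x : V, (∃ b ∈ L₁, x ∈ b) → (∃ b ∈ L₂, x ∈ b) → ∀ b ∈ L₁ ++ L₂, x ∈ b) :
    IntervalL (L₁ ++ L₂) := by
  intro x i j k hij hjk hk hxi hxk
  rw [List.length_append] at hk
  by_cases hkl : k < L₁.length
  · have hil : i < L₁.length := by omega
    have hjl : j < L₁.length := by omega
    rw [List.getD_append _ _ _ _ hil] at hxi
    rw [List.getD_append _ _ _ _ hkl] at hxk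
    rw [List.getD_append _ _ _ _ hjl]
    exact h₁ x i j k hij hjk hkl hxi hxk
  · by_cases hil : i < L₁.length
    · -- straddling case
      have hb1 : ∃ b ∈ L₁, x ∈ b := by
        refine ⟨L₁.getD i ∅, getD_mem hil, ?_⟩
        rwa [List.getD_append _ _ _ _ hil] at hxi
      have hb2 : ∃ b ∈ L₂, x ∈ b := by
        refine ⟨L₂.getD (k - L₁.length) ∅, getD_mem (by omega), ?_⟩
        rwa [List.getD_append_right _ _ _ _ (by omega)] at hxk
      exact hx x hb1 hb2 _ (getD_mem (by rw [List.length_append]; omega))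
    · -- all in L₂
      push_neg at hil
      rw [List.getD_append_right _ _ _ _ hil] at hxi
      rw [List.getD_append_right _ _ _ _ (by omega)] at hxk
      rw [List.getD_append_right _ _ _ _ (by omega)]
      exact h₂ x (i - L₁.length) (j - L₁.length) (k - L₁.length)
        (by omega) (by omega) (by omega) hxi hxk

lemma interval_map_insert {L : List (Finset V)} (r : V) (h : IntervalL L) :
    IntervalL (L.map (insert r)) := by
  intro x i j k hij hjk hk hxi hxk
  rw [List.length_map] at hk
  have hgd : ∀ (m : ℕ), m < L.length → (L.map (insert r)).getD m ∅ = insert r (L.getD m ∅) := by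
    intro m hm
    rw [List.getD_eq_getElem _ ∅ (by rw [List.length_map]; omega),
      List.getD_eq_getElem _ ∅ hm, List.getElem_map]
  rw [hgd i (by omega)] at hxi
  rw [hgd k (by omega)] at hxk
  rw [hgd j (by omega)]
  by_cases hxr : x = r
  · subst hxr
    exact Finset.mem_insert_self _ _
  · rw [Finset.mem_insert] at hxi hxk ⊢
    rcases hxi with h' | hxi
    · exact absurd h' hxr
    rcases hxk with h' | hxk
    · exact absurd h' hxr
    · exact Or.inr (h x i j k hij hjk (by omega) hxi hxk)

lemma singleton_interval (b : Finset V) : IntervalL [b] := by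
  intro x i j k hij hjk hk hxi hxk
  simp only [List.length_singleton] at hk
  have hj : j = 0 := by omega
  have hk0 : k = 0 := by omega
  subst hj
  rw [← hk0]
  exact hxk

end PW

section PW2

variable {G : SimpleGraph V}

lemma exists_root (A : Finset V) (r : V) :
    ∀ (n : ℕ) (a : V) (W : G.Walk r a), W.length ≤ n → (∀ y ∈ W.support, y ∈ A) → a ≠ r →
      ∃ ρ, G.Adj r ρ ∧ ∃ W' : G.Walk ρ a, ∀ y ∈ W'.support, y ∈ A.erase r := by
  intro n
  induction n with
  | zero =>
    intro a W hlen _ har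
    interval_cases h : W.length
    exact absurd (Walk.eq_of_length_eq_zero h).symm har
  | succ n ih =>
    intro a W hlen hWA har
    cases W with
    | nil => exact absurd rfl har
    | cons h W₁ =>
      rename_i s
      by_cases hs : r ∈ W₁.support
      · have hdrop := W₁.dropUntil r hs
        refine ih a (W₁.dropUntil r hs) ?_ ?_ har
        · have := Walk.length_dropUntil_le W₁ hs
          rw [Walk.length_cons] at hlen
          omega
        · intro y hy
          exact hWA y (by
            rw [Walk.support_cons]
            exact List.mem_cons_of_mem _ ((Walk.support_dropUntil_subset W₁ hs) hy))
      · refine ⟨s, h, W₁, ?_⟩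
        intro y hy
        rw [Finset.mem_erase]
        constructor
        · intro hyr
          exact hs (hyr ▸ hy)
        · exact hWA y (by rw [Walk.support_cons]; exact List.mem_cons_of_mem _ hy)

lemma pw_list (G : SimpleGraph V) :
    ∀ (d : ℕ) (A : Finset V) (r : V), r ∈ A →
    (∀ a ∈ A, ∃ W : G.Walk r a, ∀ y ∈ W.support, y ∈ A) →
    (∀ (a : V) (W : G.Walk r a), W.IsPath → (∀ y ∈ W.support, y ∈ A) → W.length ≤ d) →
    ∃ L : List (Finset V), L ≠ [] ∧
      (∀ b ∈ L, b.card ≤ d + 1 ∧ r ∈ b ∧ b ⊆ A) ∧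
      (∀ a ∈ A, ∃ b ∈ L, a ∈ b) ∧
      (∀ u w : V, G.Adj u w → u ∈ A → w ∈ A → ∃ b ∈ L, u ∈ b ∧ w ∈ b) ∧
      IntervalL L := by
  classical
  have singleton_case : ∀ (d : ℕ) (A : Finset V) (r : V), r ∈ A → (∀ a ∈ A, a = r) →
      ∃ L : List (Finset V), L ≠ [] ∧
        (∀ b ∈ L, b.card ≤ d + 1 ∧ r ∈ b ∧ b ⊆ A) ∧
        (∀ a ∈ A, ∃ b ∈ L, a ∈ b) ∧
        (∀ u w : V, G.Adj u w → u ∈ A → w ∈ A → ∃ b ∈ L, u ∈ b ∧ w ∈ b) ∧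
        IntervalL L := by
    intro d A r hrA hall
    refine ⟨[{r}], by simp, ?_, ?_, ?_, singleton_interval _⟩
    · intro b hb
      rw [List.mem_singleton] at hb
      subst hb
      refine ⟨by simp, by simp, ?_⟩
      intro y hy
      rw [Finset.mem_singleton] at hy
      subst hy
      exact hrA
    · intro a ha
      exact ⟨{r}, by simp, by rw [Finset.mem_singleton]; exact hall a ha⟩
    · intro u w hadj hu hw
      have h1 := hall u hu
      have h2 := hall w hw
      subst h1; subst h2
      exact absurd hadj (G.irrefl)
  intro d
  induction d with
  | zero =>
    intro A r hrA hconnA hpathA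
    refine singleton_case 0 A r hrA ?_
    intro a ha
    by_contra har
    obtain ⟨W, hW⟩ := hconnA a ha
    have hP := W.toPath.property
    have hlen := hpathA a W.toPath.val hP
      (fun y hy => hW y (Walk.support_toPath_subset W hy))
    have : W.toPath.val.length = 0 := by omega
    exact har (Walk.eq_of_length_eq_zero this).symm
  | succ d ih =>
    intro A r hrA hconnA hpathA
    by_cases hA' : A.erase r = ∅
    · refine singleton_case (d+1) A r hrA ?_
      intro a ha
      by_contra har
      have : a ∈ A.erase r := Finset.mem_erase.mpr ⟨har, ha⟩
      rw [hA'] at this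
      simp at this
    -- main case
    set A' := A.erase r with hA'def
    have hrA' : r ∉ A' := Finset.notMem_erase r A
    set Conn : V → V → Prop := fun a b => ∃ W : G.Walk a b, ∀ y ∈ W.support, y ∈ A'
      with hConn
    have hConn_refl : ∀ a ∈ A', Conn a a := by
      intro a ha
      exact ⟨Walk.nil, by intro y hy; simp at hy; subst hy; exact ha⟩
    have hConn_symm : ∀ {a b}, Conn a b → Conn b a := by
      rintro a b ⟨W, hW⟩
      exact ⟨W.reverse, fun y hy => hW y (by rwa [Walk.support_reverse, List.mem_reverse] at hy)⟩
    have hConn_trans : ∀ {a b c}, Conn a b → Conn b c → Conn a c := by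
      rintro a b c ⟨W₁, h₁⟩ ⟨W₂, h₂⟩
      refine ⟨W₁.append W₂, ?_⟩
      intro y hy
      rw [Walk.mem_support_append_iff] at hy
      rcases hy with hy | hy
      · exact h₁ y hy
      · exact h₂ y hy
    set Cl : V → Finset V := fun a => A'.filter (Conn a) with hCl
    have hmem_Cl : ∀ {a b}, b ∈ Cl a ↔ b ∈ A' ∧ Conn a b := by
      intro a b
      rw [hCl]
      exact Finset.mem_filter
    have hCl_eq : ∀ {a b}, Conn a b → Cl a = Cl b := by
      intro a b hab
      ext y
      rw [hmem_Cl, hmem_Cl]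
      constructor
      · rintro ⟨h1, h2⟩; exact ⟨h1, hConn_trans (hConn_symm hab) h2⟩
      · rintro ⟨h1, h2⟩; exact ⟨h1, hConn_trans hab h2⟩
    set CS : Finset (Finset V) := A'.image Cl with hCS
    have hCS_disj : ∀ c ∈ CS, ∀ c' ∈ CS, c ≠ c' → ∀ x, x ∈ c → x ∈ c' → False := by
      intro c hc c' hc' hne x hx hx'
      obtain ⟨a, -, rfl⟩ := Finset.mem_image.mp hc
      obtain ⟨a', -, rfl⟩ := Finset.mem_image.mp hc'
      have h1 := (hmem_Cl.mp hx).2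
      have h2 := (hmem_Cl.mp hx').2
      exact hne (hCl_eq (hConn_trans h1 (hConn_symm h2)))
    -- per-class lists
    have hex : ∀ c ∈ CS, ∃ L_c : List (Finset V), L_c ≠ [] ∧
        (∀ b ∈ L_c, b.card ≤ d + 1 ∧ b ⊆ c) ∧
        (∀ a ∈ c, ∃ b ∈ L_c, a ∈ b) ∧
        (∀ u w : V, G.Adj u w → u ∈ c → w ∈ c → ∃ b ∈ L_c, u ∈ b ∧ w ∈ b) ∧
        IntervalL L_c := by
      intro c hc
      obtain ⟨a, haA', rfl⟩ := Finset.mem_image.mp hc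
      have haA : a ∈ A := Finset.mem_of_mem_erase haA'
      have har : a ≠ r := (Finset.mem_erase.mp haA').1
      obtain ⟨W, hW⟩ := hconnA a haA
      obtain ⟨ρ, hadjρ, W', hW'⟩ := exists_root A r W.length a W le_rfl hW har
      have hConnρa : Conn ρ a := ⟨W', hW'⟩
      have hρA' : ρ ∈ A' := hW' ρ W'.start_mem_support
      have hρc : ρ ∈ Cl a := hmem_Cl.mpr ⟨hρA', hConn_symm hConnρa⟩
      have hConnaρ : Conn a ρ := hConn_symm hConnρa
      -- class is ρ-connected within itself
      have hconnc : ∀ b ∈ Cl a, ∃ Wb : G.Walk ρ b, ∀ y ∈ Wb.support, y ∈ Cl a := by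
        intro b hb
        obtain ⟨hbA', hConnab⟩ := hmem_Cl.mp hb
        obtain ⟨Wb', hWb'⟩ := hConn_trans hConnρa hConnab
        refine ⟨Wb', ?_⟩
        intro y hy
        have hyA' : y ∈ A' := hWb' y hy
        have hConnρy : Conn ρ y :=
          ⟨Wb'.takeUntil y hy, fun z hz => hWb' z (Walk.support_takeUntil_subset Wb' hy hz)⟩
        exact hmem_Cl.mpr ⟨hyA', hConn_trans hConnaρ hConnρy⟩
      -- paths within the class from ρ are short
      have hpathc : ∀ (b : V) (P : G.Walk ρ b), P.IsPath → (∀ y ∈ P.support, y ∈ Cl a) →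
          P.length ≤ d := by
        intro b P hP hPsub
        have hrP : r ∉ P.support := by
          intro hr
          have := hPsub r hr
          exact hrA' (hmem_Cl.mp this).1
        have hP' : (Walk.cons hadjρ P).IsPath := by
          rw [Walk.cons_isPath_iff]
          exact ⟨hP, hrP⟩
        have hsub' : ∀ y ∈ (Walk.cons hadjρ P).support, y ∈ A := by
          intro y hy
          rw [Walk.support_cons] at hy
          rcases List.mem_cons.mp hy with rfl | hy
          · exact hrA
          · exact Finset.mem_of_mem_erase (hmem_Cl.mp (hPsub y hy)).1
        have := hpathA b (Walk.cons hadjρ P) hP' hsub'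
        rw [Walk.length_cons] at this
        omega
      obtain ⟨L_c, hL1, hL2, hL3, hL4, hL5⟩ := ih (Cl a) ρ hρc hconnc hpathc
      refine ⟨L_c, hL1, ?_, hL3, hL4, hL5⟩
      intro b hb
      exact ⟨(hL2 b hb).1, (hL2 b hb).2.2⟩
    choose F hF using hex
    set Fm : Finset V → List (Finset V) :=
      fun c => if h : c ∈ CS then (F c h).map (insert r) else [{r}] with hFm
    have hFm_eq : ∀ c (hc : c ∈ CS), Fm c = (F c hc).map (insert r) := by
      intro c hc
      rw [hFm]
      exact dif_pos hc
    have hFm_ne : ∀ c ∈ CS, Fm c ≠ [] := by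
      intro c hc
      rw [hFm_eq c hc]
      exact fun h => (hF c hc).1 (List.map_eq_nil_iff.mp h)
    have hCsubA : ∀ c ∈ CS, c ⊆ A := by
      intro c hc
      obtain ⟨a, -, rfl⟩ := Finset.mem_image.mp hc
      intro y hy
      exact Finset.mem_of_mem_erase (hmem_Cl.mp hy).1
    have hFm_bag : ∀ c ∈ CS, ∀ b ∈ Fm c, b.card ≤ d + 2 ∧ r ∈ b ∧ b ⊆ A := by
      intro c hc b hb
      rw [hFm_eq c hc] at hb
      obtain ⟨b', hb', rfl⟩ := List.mem_map.mp hb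
      obtain ⟨hcard, hsub⟩ := (hF c hc).2.1 b' hb'
      refine ⟨le_trans (Finset.card_insert_le _ _) (by omega), Finset.mem_insert_self _ _, ?_⟩
      intro y hy
      rcases Finset.mem_insert.mp hy with rfl | hy
      · exact hrA
      · exact hCsubA c hc (hsub hy)
    have hFm_x : ∀ c ∈ CS, ∀ x, x ≠ r → ∀ b ∈ Fm c, x ∈ b → x ∈ c := by
      intro c hc x hxr b hb hxb
      rw [hFm_eq c hc] at hb
      obtain ⟨b', hb', rfl⟩ := List.mem_map.mp hb
      rcases Finset.mem_insert.mp hxb with h | h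
      · exact absurd h hxr
      · exact ((hF c hc).2.1 b' hb').2 h
    have hFm_cov : ∀ c ∈ CS, ∀ a ∈ c, ∃ b ∈ Fm c, a ∈ b := by
      intro c hc a ha
      obtain ⟨b, hb, hab⟩ := (hF c hc).2.2.1 a ha
      exact ⟨insert r b, by rw [hFm_eq c hc]; exact List.mem_map_of_mem hb,
        Finset.mem_insert_of_mem hab⟩
    have hFm_edge : ∀ c ∈ CS, ∀ u w : V, G.Adj u w → u ∈ c → w ∈ c →
        ∃ b ∈ Fm c, u ∈ b ∧ w ∈ b := by
      intro c hc u w hadj hu hw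
      obtain ⟨b, hb, hub, hwb⟩ := (hF c hc).2.2.2.1 u w hadj hu hw
      exact ⟨insert r b, by rw [hFm_eq c hc]; exact List.mem_map_of_mem hb,
        Finset.mem_insert_of_mem hub, Finset.mem_insert_of_mem hwb⟩
    have hFm_int : ∀ c ∈ CS, IntervalL (Fm c) := by
      intro c hc
      rw [hFm_eq c hc]
      exact interval_map_insert r (hF c hc).2.2.2.2
    -- interval property of concatenation
    have haux : ∀ cs : List (Finset V), (∀ c ∈ cs, c ∈ CS) → cs.Nodup →
        IntervalL (cs.flatMap Fm) := by
      intro cs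
      induction cs with
      | nil =>
        intro _ _ x i j k _ _ hk _ _
        simp at hk
      | cons c cs ihc =>
        intro hmem hnd
        have hcCS : c ∈ CS := hmem c (List.mem_cons_self)
        rw [List.flatMap_cons]
        refine interval_append (hFm_int c hcCS)
          (ihc (fun c' hc' => hmem c' (List.mem_cons_of_mem _ hc')) (List.nodup_cons.mp hnd).2) ?_
        intro x hx1 hx2 b hb
        by_cases hxr : x = r
        · subst hxr
          rcases List.mem_append.mp hb with hb | hb
          · exact (hFm_bag c hcCS b hb).2.1
          · obtain ⟨c', hc', hb'⟩ := List.mem_flatMap.mp hb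
            exact (hFm_bag c' (hmem c' (List.mem_cons_of_mem _ hc')) b hb').2.1
        · exfalso
          obtain ⟨b₁, hb₁, hxb₁⟩ := hx1
          obtain ⟨b₂, hb₂, hxb₂⟩ := hx2
          obtain ⟨c', hc', hb₂'⟩ := List.mem_flatMap.mp hb₂
          have hc'CS : c' ∈ CS := hmem c' (List.mem_cons_of_mem _ hc')
          have hxc : x ∈ c := hFm_x c hcCS x hxr b₁ hb₁ hxb₁
          have hxc' : x ∈ c' := hFm_x c' hc'CS x hxr b₂ hb₂' hxb₂
          have hne : c ≠ c' := by
            rintro rfl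
            exact (List.nodup_cons.mp hnd).1 hc'
          exact hCS_disj c hcCS c' hc'CS hne x hxc hxc'
    set L : List (Finset V) := CS.toList.flatMap Fm with hL
    have hLmem : ∀ {b}, b ∈ L ↔ ∃ c ∈ CS, b ∈ Fm c := by
      intro b
      rw [hL, List.mem_flatMap]
      constructor
      · rintro ⟨c, hc, hb⟩
        exact ⟨c, Finset.mem_toList.mp hc, hb⟩
      · rintro ⟨c, hc, hb⟩
        exact ⟨c, Finset.mem_toList.mpr hc, hb⟩
    have hLne : L ≠ [] := by
      obtain ⟨a, ha⟩ := Finset.nonempty_iff_ne_empty.mpr hA'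
      have hcCS : Cl a ∈ CS := Finset.mem_image_of_mem Cl ha
      obtain ⟨b, hb⟩ := List.exists_mem_of_ne_nil _ (hFm_ne (Cl a) hcCS)
      exact List.ne_nil_of_mem (hLmem.mpr ⟨Cl a, hcCS, hb⟩)
    refine ⟨L, hLne, ?_, ?_, ?_, haux CS.toList (fun c hc => Finset.mem_toList.mp hc) CS.nodup_toList⟩
    · intro b hb
      obtain ⟨c, hc, hb'⟩ := hLmem.mp hb
      obtain ⟨h1, h2, h3⟩ := hFm_bag c hc b hb'
      exact ⟨h1, h2, h3⟩
    · intro a ha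
      by_cases har : a = r
      · subst har
        obtain ⟨b, hb⟩ := List.exists_mem_of_ne_nil _ hLne
        obtain ⟨c, hc, hb'⟩ := hLmem.mp hb
        exact ⟨b, hb, (hFm_bag c hc b hb').2.1⟩
      · have haA' : a ∈ A' := Finset.mem_erase.mpr ⟨har, ha⟩
        have hcCS : Cl a ∈ CS := Finset.mem_image_of_mem Cl haA'
        have haCl : a ∈ Cl a := hmem_Cl.mpr ⟨haA', hConn_refl a haA'⟩
        obtain ⟨b, hb, hab⟩ := hFm_cov (Cl a) hcCS a haCl
        exact ⟨b, hLmem.mpr ⟨Cl a, hcCS, hb⟩, hab⟩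
    · intro u w hadj huA hwA
      by_cases hur : u = r
      · have hwr : w ≠ r := fun h => hadj.ne (hur.trans h.symm)
        have hwA' : w ∈ A' := Finset.mem_erase.mpr ⟨hwr, hwA⟩
        have hcCS : Cl w ∈ CS := Finset.mem_image_of_mem Cl hwA'
        have hwCl : w ∈ Cl w := hmem_Cl.mpr ⟨hwA', hConn_refl w hwA'⟩
        obtain ⟨b, hb, hwb⟩ := hFm_cov (Cl w) hcCS w hwCl
        refine ⟨b, hLmem.mpr ⟨Cl w, hcCS, hb⟩, ?_, hwb⟩
        rw [hur]
        exact (hFm_bag _ hcCS b hb).2.1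
      · by_cases hwr : w = r
        · have huA' : u ∈ A' := Finset.mem_erase.mpr ⟨hur, huA⟩
          have hcCS : Cl u ∈ CS := Finset.mem_image_of_mem Cl huA'
          have huCl : u ∈ Cl u := hmem_Cl.mpr ⟨huA', hConn_refl u huA'⟩
          obtain ⟨b, hb, hub⟩ := hFm_cov (Cl u) hcCS u huCl
          refine ⟨b, hLmem.mpr ⟨Cl u, hcCS, hb⟩, hub, ?_⟩
          rw [hwr]
          exact (hFm_bag _ hcCS b hb).2.1
        · have huA' : u ∈ A' := Finset.mem_erase.mpr ⟨hur, huA⟩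
          have hwA' : w ∈ A' := Finset.mem_erase.mpr ⟨hwr, hwA⟩
          have hConnuw : Conn u w := by
            refine ⟨Walk.cons hadj Walk.nil, ?_⟩
            intro y hy
            have : y = u ∨ y = w := by simpa using hy
            rcases this with rfl | rfl
            · exact huA'
            · exact hwA'
          have hcCS : Cl u ∈ CS := Finset.mem_image_of_mem Cl huA'
          have huCl : u ∈ Cl u := hmem_Cl.mpr ⟨huA', hConn_refl u huA'⟩
          have hwCl : w ∈ Cl u := hmem_Cl.mpr ⟨hwA', hConnuw⟩
          obtain ⟨b, hb, hub, hwb⟩ := hFm_edge (Cl u) hcCS u w hadj huCl hwCl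
          exact ⟨b, hLmem.mpr ⟨Cl u, hcCS, hb⟩, hub, hwb⟩

end PW2

end Aux

section Defs

variable {V : Type u} {W : Type v}

/-- A path decomposition of `G`: a sequence of bags covering all edges and vertices,
with each vertex appearing in a consecutive interval of bags. -/
structure PathDecomp (G : SimpleGraph V) where
  n : ℕ
  bag : Fin (n + 1) → Finset V
  cov_edge : ∀ ⦃u w : V⦄, G.Adj u w → ∃ i, u ∈ bag i ∧ w ∈ bag i
  cov_vert : ∀ x : V, ∃ i, x ∈ bag i
  interval : ∀ (x : V) (i j k : Fin (n + 1)), i ≤ j → j ≤ k →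
    x ∈ bag i → x ∈ bag k → x ∈ bag j

/-- The pathwidth of `G` is at most `w`. -/
def pwLE (G : SimpleGraph V) (w : ℕ) : Prop :=
  ∃ D : PathDecomp G, ∀ i, (D.bag i).card ≤ w + 1

/-- The rooted pathwidth of `G` at `x` is at most `r`: there is a path decomposition
of width `≤ r` whose last bag contains `x`. -/
def rpwLE (G : SimpleGraph V) (x : V) (r : ℕ) : Prop :=
  ∃ D : PathDecomp G, x ∈ D.bag (Fin.last D.n) ∧ ∀ i, (D.bag i).card ≤ r + 1

/-- The rooted pathwidth of `G` at `x`. -/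
noncomputable def rpw (G : SimpleGraph V) (x : V) : ℕ := sInf {r | rpwLE G x r}

/-- `G` has a cycle of length `n`. -/
def HasCycleLen (G : SimpleGraph V) (n : ℕ) : Prop :=
  ∃ (x : V) (c : G.Walk x x), c.IsCycle ∧ c.length = n

/-- The circumference of `G` equals `t` (it is `0` if `G` is acyclic). -/
def CircumEq (G : SimpleGraph V) (t : ℕ) : Prop :=
  (∀ n, HasCycleLen G n → n ≤ t) ∧ (t = 0 ∨ HasCycleLen G t)

/-- `G` is `k`-connected: it has more than `k` vertices and stays connected after
deleting any set of fewer than `k` vertices. -/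
def KConn (G : SimpleGraph V) (k : ℕ) : Prop :=
  k < Nat.card V ∧
  ∀ S : Set V, S.Finite → S.ncard < k → (G.induce Sᶜ).Connected

/-- `G` has `k` pairwise vertex-disjoint cycles, each of length at least `t`. -/
def HasKDisjointCyclesLen (G : SimpleGraph V) (k t : ℕ) : Prop :=
  ∃ c : Fin k → Σ x : V, G.Walk x x,
    (∀ m, (c m).2.IsCycle ∧ t ≤ (c m).2.length) ∧
    ∀ m m', m ≠ m' → List.Disjoint (c m).2.support (c m').2.support

/-- `H` is a minor of `G`, witnessed by branch sets `br`. -/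
def IsMinorWithBranch (G : SimpleGraph V) (H : SimpleGraph W) (br : W → Set V) : Prop :=
  (∀ w, (G.induce (br w)).Connected) ∧
  (∀ w w', w ≠ w' → Disjoint (br w) (br w')) ∧
  (∀ ⦃w w'⦄, H.Adj w w' → ∃ u ∈ br w, ∃ u' ∈ br w', G.Adj u u')

/-- `H` is a minor of `G`. -/
def HasMinor (G : SimpleGraph V) (H : SimpleGraph W) : Prop :=
  ∃ br : W → Set V, IsMinorWithBranch G H br



/-- A rooted forest on `V`, given by a parent function together with a consistent
height function (the height of a vertex is its distance to the root of its component). -/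
structure RootedForest (V : Type u) where
  parent : V → Option V
  height : V → ℕ
  height_root : ∀ x, parent x = none → height x = 0
  height_child : ∀ ⦃x y⦄, parent x = some y → height x = height y + 1

/-- `x` is an ancestor of `y` (possibly `x = y`). -/
def RootedForest.Ancestor (F : RootedForest V) (x y : V) : Prop :=
  Relation.ReflTransGen (fun a b => F.parent a = some b) y x

/-- `x` is a proper ancestor of `y`. -/
def RootedForest.ProperAncestor (F : RootedForest V) (x y : V) : Prop :=
  Relation.TransGen (fun a b => F.parent a = some b) y x

/-- The treedepth of `G` is at most `d`: there is a rooted forest of height at most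
`d - 1` on `V(G)` whose closure contains `G`. -/
def treedepthLE (G : SimpleGraph V) (d : ℕ) : Prop :=
  ∃ F : RootedForest V, (∀ x, F.height x + 1 ≤ d) ∧
    ∀ ⦃x y⦄, G.Adj x y → F.ProperAncestor x y ∨ F.ProperAncestor y x

/-- Vertices of the complete binary tree of height `h`: binary strings of length at
most `h`; the parent of a nonempty string is its tail, the root is the empty string. -/
abbrev CBTVert (h : ℕ) := {l : List Bool // l.length ≤ h}

/-- The complete binary tree of height `h` as a simple graph. -/
def CBT (h : ℕ) : SimpleGraph (CBTVert h) where
  Adj u w := (∃ b, u.val = b :: w.val) ∨ (∃ b, w.val = b :: u.val)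
  symm := ⟨by intro u w hv; tauto⟩
  loopless := by
    constructor
    rintro u (⟨b, hb⟩ | ⟨b, hb⟩) <;>
    · have := congrArg List.length hb
      simp at this

/-- The root of the complete binary tree. -/
def CBTroot (h : ℕ) : CBTVert h := ⟨[], by simp⟩

/-- The `m`-th leaf (in left-to-right order) of the complete binary tree of
height `h`: the binary string of length `h` whose bits are the binary digits of `m`,
most significant first. -/
def leafIdx (h : ℕ) (m : Fin (2 ^ h)) : CBTVert h :=
  ⟨(List.range h).map fun i => m.val.testBit (h - 1 - i), by simp⟩

/-- The graph obtained from `G` by adding `k` dominant vertices. -/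
def addDominant (G : SimpleGraph V) (k : ℕ) : SimpleGraph (V ⊕ Fin k) where
  Adj x y := (∃ a b, x = .inl a ∧ y = .inl b ∧ G.Adj a b) ∨
             (∃ a c, x = .inl a ∧ y = .inr c) ∨
             (∃ c a, x = .inr c ∧ y = .inl a) ∨
             (∃ c c', x = .inr c ∧ y = .inr c' ∧ c ≠ c')
  symm := by
    constructor
    rintro x y (⟨a,b,rfl,rfl,hab⟩|⟨a,c,rfl,rfl⟩|⟨c,a,rfl,rfl⟩|⟨c,c',rfl,rfl,hcc⟩)
    · exact Or.inl ⟨b,a,rfl,rfl,hab.symm⟩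
    · exact Or.inr (Or.inr (Or.inl ⟨c,a,rfl,rfl⟩))
    · exact Or.inr (Or.inl ⟨a,c,rfl,rfl⟩)
    · exact Or.inr (Or.inr (Or.inr ⟨c',c,rfl,rfl,hcc.symm⟩))
  loopless := by
    constructor
    rintro x (⟨a,b,rfl,h,hab⟩|⟨a,c,rfl,h⟩|⟨c,a,rfl,h⟩|⟨c,c',rfl,h,hcc⟩)
    · cases Sum.inl.inj h; exact G.irrefl hab
    · simp at h
    · simp at h
    · cases Sum.inr.inj h; exact hcc rfl

/-- The minimum size of a transversal of `G` (a set of vertices meeting all cycles). -/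
noncomputable def tau (G : SimpleGraph V) : ℕ :=
  sInf {n | ∃ S : Set V, S.ncard = n ∧ (G.induce Sᶜ).IsAcyclic}

/-- `x` is a cut-vertex of `G`. -/
def IsCutVertex (G : SimpleGraph V) (x : V) : Prop :=
  ∃ (u w : V) (hu : u ≠ x) (hw : w ≠ x),
    G.Reachable u w ∧ ¬ (G.induce {y | y ≠ x}).Reachable ⟨u, hu⟩ ⟨w, hw⟩

/-- A block of `G`: a maximal 2-connected subgraph, or a bridge edge,
or an isolated vertex. -/
def IsBlock (G : SimpleGraph V) (B : G.Subgraph) : Prop :=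
  (KConn B.coe 2 ∧ ∀ B' : G.Subgraph, B ≤ B' → KConn B'.coe 2 → B' = B) ∨
  (∃ (u w : V) (huw : G.Adj u w), G.IsBridge s(u, w) ∧ B = G.subgraphOfAdj huw) ∨
  (∃ x : V, (∀ u, ¬ G.Adj x u) ∧ B = G.singletonSubgraph x)

/-- The block-cut-forest of `G`: vertices are the cut-vertices and the blocks of `G`,
with a cut-vertex adjacent to exactly the blocks containing it. -/
def BCF (G : SimpleGraph V) :
    SimpleGraph ({x : V // IsCutVertex G x} ⊕ {B : G.Subgraph // IsBlock G B}) where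
  Adj x y := (∃ v B, x = .inl v ∧ y = .inr B ∧ v.val ∈ B.val.verts) ∨
             (∃ v B, x = .inr B ∧ y = .inl v ∧ v.val ∈ B.val.verts)
  symm := by
    constructor
    rintro x y (⟨v,B,rfl,rfl,hm⟩|⟨v,B,rfl,rfl,hm⟩)
    · exact Or.inr ⟨v,B,rfl,rfl,hm⟩
    · exact Or.inl ⟨v,B,rfl,rfl,hm⟩
  loopless := by
    constructor
    rintro x (⟨v,B,rfl,h,_⟩|⟨v,B,rfl,h,_⟩) <;> simp at h

/-- The octahedron `K_{2,2,2}` minus the edges of a triangle: parts are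
`{i} × {0,1}`; the deleted triangle consists of the vertices `(i, 0)`. -/
def Qgraph : SimpleGraph (Fin 3 × Fin 2) where
  Adj x y := x.1 ≠ y.1 ∧ ¬(x.2 = 0 ∧ y.2 = 0)
  symm := ⟨fun x y h => ⟨h.1.symm, fun hc => h.2 ⟨hc.2, hc.1⟩⟩⟩
  loopless := ⟨fun x h => h.1 rfl⟩

/-- The disjoint union of two triangles. -/
def TwoTriangles : SimpleGraph (Fin 3 ⊕ Fin 3) where
  Adj x y := (∃ a b, x = .inl a ∧ y = .inl b ∧ a ≠ b) ∨
             (∃ a b, x = .inr a ∧ y = .inr b ∧ a ≠ b)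
  symm := by
    constructor
    rintro x y (⟨a,b,rfl,rfl,hab⟩|⟨a,b,rfl,rfl,hab⟩)
    · exact Or.inl ⟨b,a,rfl,rfl,hab.symm⟩
    · exact Or.inr ⟨b,a,rfl,rfl,hab.symm⟩
  loopless := by
    constructor
    rintro x (⟨a,b,rfl,h,hab⟩|⟨a,b,rfl,h,hab⟩) <;>
    · first
      | (cases Sum.inl.inj h; exact hab rfl)
      | (cases Sum.inr.inj h; exact hab rfl)

/-- `A` contains a subdivision of `B` as a subgraph: branch vertices are given by an
injective map `f`, and each edge of `B` is replaced by a path in `A`; distinct edges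
give internally disjoint paths, and no branch vertex lies in the interior of a path. -/
def ContainsSubdivision (A : SimpleGraph V) (B : SimpleGraph W) : Prop :=
  ∃ (f : W → V) (P : ∀ ⦃u w : W⦄, B.Adj u w → A.Walk (f u) (f w)),
    Function.Injective f ∧
    (∀ ⦃u w : W⦄ (h : B.Adj u w), (P h).IsPath) ∧
    (∀ ⦃u w : W⦄ (h : B.Adj u w) (x : W), f x ∈ (P h).support → x = u ∨ x = w) ∧
    (∀ ⦃u w x y : W⦄ (h : B.Adj u w) (h' : B.Adj x y), s(u, w) ≠ s(x, y) →
      ∀ z, z ∈ (P h).support → z ∈ (P h').support →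
        z ∈ ({f u, f w} : Set V) ∩ {f x, f y})

section Convert

variable {V₀ : Type} [DecidableEq V₀]

lemma pwLE_of_list {G : SimpleGraph V₀} {w : ℕ} (L : List (Finset V₀)) (hne : L ≠ [])
    (hbag : ∀ b ∈ L, b.card ≤ w + 1)
    (hvert : ∀ x : V₀, ∃ b ∈ L, x ∈ b)
    (hedge : ∀ u v : V₀, G.Adj u v → ∃ b ∈ L, u ∈ b ∧ v ∈ b)
    (hint : IntervalL L) : pwLE G w := by
  have hpos : 0 < L.length := List.length_pos_iff.mpr hne
  have hlen : L.length = (L.length - 1) + 1 := by omega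
  have hidx : ∀ b ∈ L, ∃ i : Fin (L.length - 1 + 1), L.getD i ∅ = b := by
    intro b hb
    obtain ⟨i, hi, hib⟩ := List.mem_iff_getElem.mp hb
    refine ⟨⟨i, by omega⟩, ?_⟩
    rw [List.getD_eq_getElem L ∅ (by simpa using hi)]
    simpa using hib
  refine ⟨⟨L.length - 1, fun i => L.getD i ∅, ?_, ?_, ?_⟩, ?_⟩
  · intro u v huv
    obtain ⟨b, hb, hub, hvb⟩ := hedge u v huv
    obtain ⟨i, hi⟩ := hidx b hb
    exact ⟨i, by simp only [hi]; exact hub, by simp only [hi]; exact hvb⟩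
  · intro x
    obtain ⟨b, hb, hxb⟩ := hvert x
    obtain ⟨i, hi⟩ := hidx b hb
    exact ⟨i, by simp only [hi]; exact hxb⟩
  · intro x i j k hij hjk hxi hxk
    exact hint x i j k hij hjk (by omega) hxi hxk
  · intro i
    exact hbag _ (getD_mem (by omega))

end Convert

/-- Every 2-connected graph with circumference `t` contains no
path with `⌈t²/2⌉` edges, and consequently has pathwidth at most `⌈t²/2⌉ - 1`. -/
theorem stmt15 {V : Type} [Fintype V] (G : SimpleGraph V) (t : ℕ)
    (h2 : KConn G 2) (hc : CircumEq G t) :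
    (¬ ∃ (u v : V) (p : G.Walk u v), p.IsPath ∧ p.length = (t ^ 2 + 1) / 2) ∧
    pwLE G ((t ^ 2 + 1) / 2 - 1) := by
  classical
  obtain ⟨hcard, hcut⟩ := h2
  have hconn : G.Connected := by
    have h := hcut ∅ Set.finite_empty (by simp)
    rw [Set.compl_empty] at h
    exact h.map (G.induceUnivIso.toEmbedding.toHom) G.induceUnivIso.toEquiv.surjective
  have Hcyc : ∀ (x : V) (D : G.Walk x x), D.IsCycle → D.length ≤ t :=
    fun x D hD => hc.1 D.length ⟨x, D, hD, rfl⟩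
  have h3 : 3 ≤ Nat.card V := hcard
  -- t ≥ 3
  have ht3 : 3 ≤ t := by
    have h1 : 1 < Fintype.card V := by
      rw [← Nat.card_eq_fintype_card]
      omega
    obtain ⟨a, b, hab⟩ := Fintype.exists_pair_of_one_lt_card h1
    obtain ⟨W⟩ := hconn a b
    obtain ⟨u', v', hadj⟩ : ∃ (u' v' : V), G.Adj u' v' := by
      cases W with
      | nil => exact absurd rfl hab
      | cons h q => exact ⟨_, _, h⟩
    obtain ⟨x, C, hC, -, -⟩ := cycle_through_edge h3 hcut hadj
    exact le_trans hC.three_le_length (Hcyc x C hC)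
  have part1 : ∀ {u v : V} (P : G.Walk u v), P.IsPath → 2 * P.length ≤ t * t - t :=
    fun P hP => two_mul_path_length_le h3 hcut hconn Hcyc P hP
  have htt : t ≤ t * t := Nat.le_mul_of_pos_left t (by omega)
  have hpow : t ^ 2 = t * t := by ring
  constructor
  · rintro ⟨u, v, p, hp, hplen⟩
    have hb := part1 p hp
    rw [hpow] at hplen
    set s := t * t with hs
    omega
  · -- pathwidth
    have hr : Nonempty V := by
      have : 0 < Fintype.card V := by rw [← Nat.card_eq_fintype_card]; omega
      exact Fintype.card_pos_iff.mp this
    obtain ⟨r⟩ := hr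
    set d := (t ^ 2 + 1) / 2 - 1 with hd
    obtain ⟨L, hLne, hLbag, hLvert, hLedge, hLint⟩ := pw_list G d Finset.univ r
      (Finset.mem_univ r)
      (fun a _ => ⟨(hconn r a).some, fun y _ => Finset.mem_univ y⟩)
      (by
        intro a W hW _
        have hb := part1 W hW
        rw [hpow] at hd
        set s := t * t with hs
        omega)
    refine pwLE_of_list L hLne ?_ ?_ ?_ hLint
    · intro b hb
      exact (hLbag b hb).1
    · intro x
      obtain ⟨b, hb, hxb⟩ := hLvert x (Finset.mem_univ x)
      exact ⟨b, hb, hxb⟩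
    · intro u v huv
      exact hLedge u v huv (Finset.mem_univ u) (Finset.mem_univ v)
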